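/- Let D be a finite-dimensional central division algebra over a field F that carries a valuation v_D extending a valuation v on F. Then [D̄ : F̄] · |Γ_D : Γ_F| ≤ [D : F] (the fundamental inequality), where D̄, F̄ are the residue (division) rings and Γ_D, Γ_F the value groups. -/

import Mathlib

/-- The value group of a valuation on a division ring, as a subgroup of `Γ₀ˣ`. -/
def valueGroup {D Γ₀ : Type} [DivisionRing D] [LinearOrderedCommGroupWithZero Γ₀]
    (vD : Valuation D Γ₀) : Subgroup Γ₀ˣ :=
  (Units.map vD.toMonoidWithZeroHom.toMonoidHom).range

open Finset

/-- fundamental inequality `[D̄ : F̄]·|Γ_D : Γ_F| ≤ [D : F]`, phrased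
elementwise. Let `D` be a finite-dimensional central division algebra over `F` with a
valuation `v_D` extending the valuation `v = v_D ∘ algebraMap` of `F`. If `x₁,…,x_n` are
valuation integers of `D` whose residues are linearly independent over the residue field of
`F`, and `y₁,…,y_m ∈ D^*` have values in pairwise distinct cosets of `Γ_F` in `Γ_D`, then
`n·m ≤ [D : F]`; equivalently `[D̄ : F̄]·|Γ_D : Γ_F| ≤ [D : F]`. -/
theorem fundamental_inequality (F D Γ₀ : Type) [Field F] [DivisionRing D] [Algebra F D]
    [FiniteDimensional F D] [LinearOrderedCommGroupWithZero Γ₀]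
    (vD : Valuation D Γ₀)
    (n m : ℕ) (x : Fin n → D) (y : Fin m → D)
    (hx : ∀ i, vD (x i) ≤ 1)
    (hxind : ∀ c : Fin n → F, (∀ i, vD (algebraMap F D (c i)) ≤ 1) →
      vD (∑ i, algebraMap F D (c i) * x i) < 1 → ∀ i, vD (algebraMap F D (c i)) < 1)
    (hy : ∀ i, y i ≠ 0)
    (hydist : ∀ i j, i ≠ j → ∀ c : F, c ≠ 0 →
      vD (y i) ≠ vD (algebraMap F D c) * vD (y j)) :
    n * m ≤ Module.finrank F D := by
  classical
  -- the map `algebraMap F D` is injective (F is a field, D nontrivial)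
  have halg : ∀ c : F, c ≠ 0 → algebraMap F D c ≠ 0 := fun c hc =>
    (map_ne_zero (algebraMap F D)).mpr hc
  -- Key: value of a nontrivial combination of the `x i` equals the max coefficient value
  have key : ∀ c : Fin n → F, (∃ i, c i ≠ 0) →
      ∃ k, c k ≠ 0 ∧ vD (∑ i, algebraMap F D (c i) * x i) = vD (algebraMap F D (c k)) ∧
        ∀ i, vD (algebraMap F D (c i)) ≤ vD (algebraMap F D (c k)) := by
    intro c hc
    obtain ⟨i₀, hi₀⟩ := hc
    have hne : (Finset.univ : Finset (Fin n)).Nonempty := ⟨i₀, mem_univ _⟩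
    obtain ⟨k, -, hk⟩ := Finset.exists_max_image Finset.univ
      (fun i => vD (algebraMap F D (c i))) hne
    have hkmax : ∀ i, vD (algebraMap F D (c i)) ≤ vD (algebraMap F D (c k)) :=
      fun i => hk i (mem_univ i)
    have hck : c k ≠ 0 := by
      intro h
      have h0 : vD (algebraMap F D (c i₀)) ≤ 0 := by
        simpa [h] using hkmax i₀
      exact hi₀ ((map_eq_zero (algebraMap F D)).mp
        ((Valuation.zero_iff vD).mp (le_antisymm h0 zero_le')))
    refine ⟨k, hck, ?_, hkmax⟩
    set d : Fin n → F := fun i => c i / c k with hd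
    have hdval : ∀ i, vD (algebraMap F D (d i)) ≤ 1 := by
      intro i
      have : vD (algebraMap F D (d i)) =
          vD (algebraMap F D (c i)) / vD (algebraMap F D (c k)) := by
        simp [hd, div_eq_mul_inv, map_mul, map_inv₀]
      rw [this]
      exact div_le_one_of_le₀ (hkmax i) zero_le'
    have hdk : vD (algebraMap F D (d k)) = 1 := by
      simp [hd, div_self hck]
    have hsum : vD (∑ i, algebraMap F D (d i) * x i) = 1 := by
      refine le_antisymm (vD.map_sum_le fun i _ => ?_) ?_
      · calc vD (algebraMap F D (d i) * x i)
            = vD (algebraMap F D (d i)) * vD (x i) := map_mul vD _ _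
          _ ≤ 1 * 1 := mul_le_mul' (hdval i) (hx i)
          _ = 1 := one_mul 1
      · by_contra hlt
        push_neg at hlt
        exact absurd (hxind d hdval hlt k) (by simp [hdk])
    have hfac : (∑ i, algebraMap F D (c i) * x i) =
        algebraMap F D (c k) * ∑ i, algebraMap F D (d i) * x i := by
      rw [Finset.mul_sum]
      refine Finset.sum_congr rfl fun i _ => ?_
      rw [← mul_assoc, ← map_mul]
      congr 2
      simp only [hd]
      field_simp
    rw [hfac, map_mul, hsum, mul_one]
  -- linear independence of the products `x i * y j`
  have hli : LinearIndependent F (fun p : Fin n × Fin m => x p.1 * y p.2) := by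
    rw [Fintype.linearIndependent_iff]
    intro g hg
    by_contra hgn
    push_neg at hgn
    obtain ⟨p₀, hp₀⟩ := hgn
    -- S j = ∑ i, c i j * x i
    set S : Fin m → D := fun j => ∑ i, algebraMap F D (g (i, j)) * x i with hS
    have hsum : ∑ j, S j * y j = 0 := by
      rw [← hg, Fintype.sum_prod_type, Finset.sum_comm]
      refine Fintype.sum_congr _ _ fun j => ?_
      rw [hS, Finset.sum_mul]
      refine Fintype.sum_congr _ _ fun i => ?_
      rw [Algebra.smul_def, mul_assoc]
    -- the set of columns with a nonzero coefficient
    set T : Finset (Fin m) := Finset.univ.filter (fun j => ∃ i, g (i, j) ≠ 0) with hT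
    have hTmem : ∀ j, j ∈ T ↔ ∃ i, g (i, j) ≠ 0 := by
      intro j; simp [hT]
    have hTne : T.Nonempty := ⟨p₀.2, (hTmem p₀.2).mpr ⟨p₀.1, hp₀⟩⟩
    -- sum over T equals the full sum
    have hsumT : ∑ j ∈ T, S j * y j = 0 := by
      rw [← hsum]
      refine Finset.sum_subset (Finset.subset_univ T) fun j _ hj => ?_
      have : ∀ i, g (i, j) = 0 := by
        intro i; by_contra h
        exact hj ((hTmem j).mpr ⟨i, h⟩)
      simp [hS, this]
    -- for j ∈ T, the value of `S j * y j` is nonzero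
    have hval : ∀ j ∈ T, ∃ k, g (k, j) ≠ 0 ∧
        vD (S j * y j) = vD (algebraMap F D (g (k, j))) * vD (y j) := by
      intro j hj
      obtain ⟨k, hk, hkeq, -⟩ := key (fun i => g (i, j)) ((hTmem j).mp hj)
      exact ⟨k, hk, by rw [map_mul, hS, hkeq]⟩
    have hval0 : ∀ j ∈ T, vD (S j * y j) ≠ 0 := by
      intro j hj
      obtain ⟨k, hk, hkeq⟩ := hval j hj
      rw [hkeq]
      exact mul_ne_zero (vD.ne_zero_iff.mpr (halg _ hk)) (vD.ne_zero_iff.mpr (hy j))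
    -- values of distinct terms are distinct
    have hdistinct : ∀ j ∈ T, ∀ j' ∈ T, j ≠ j' → vD (S j * y j) ≠ vD (S j' * y j') := by
      intro j hj j' hj' hne heq
      obtain ⟨k, hk, hkeq⟩ := hval j hj
      obtain ⟨k', hk', hkeq'⟩ := hval j' hj'
      rw [hkeq, hkeq'] at heq
      refine hydist j j' hne (g (k', j') / g (k, j)) (div_ne_zero hk' hk) ?_
      have hvk : vD (algebraMap F D (g (k, j))) ≠ 0 := vD.ne_zero_iff.mpr (halg _ hk)
      have : vD (algebraMap F D (g (k', j') / g (k, j))) =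
          vD (algebraMap F D (g (k', j'))) / vD (algebraMap F D (g (k, j))) := by
        simp [div_eq_mul_inv, map_mul, map_inv₀]
      rw [this, div_mul_eq_mul_div, ← heq, mul_comm, mul_div_assoc,
        div_self hvk, mul_one]
    -- pick the term of maximal value
    obtain ⟨j₀, hj₀, hj₀max⟩ := Finset.exists_max_image T (fun j => vD (S j * y j)) hTne
    have hothers : ∀ j ∈ T.erase j₀, vD (S j * y j) < vD (S j₀ * y j₀) := by
      intro j hj
      obtain ⟨hne, hjT⟩ := Finset.mem_erase.mp hj
      exact lt_of_le_of_ne (hj₀max j hjT) (hdistinct j hjT j₀ hj₀ hne)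
    have : vD (∑ j ∈ T, S j * y j) = vD (S j₀ * y j₀) := by
      rw [← Finset.add_sum_erase T _ hj₀]
      rcases Finset.eq_empty_or_nonempty (T.erase j₀) with he | hne'
      · simp [he]
      · exact vD.map_add_eq_of_lt_left
          (vD.map_sum_lt (hval0 j₀ hj₀) hothers)
    rw [hsumT, map_zero] at this
    exact hval0 j₀ hj₀ this.symm
  have := hli.fintype_card_le_finrank
  simpa [Fintype.card_prod] using this
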